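/- Let (M, τ, h) be a Galilei manifold, v a unit timelike vector field, and ∇̊ the special Galilei connection with coefficients Γ̊^ρ_{μν} = v^ρ ∂_μ τ_ν + (1/2) h^{ρσ}(∂_μ h_{νσ} + ∂_ν h_{μσ} − ∂_σ h_{μν}). Then the Newton–Coriolis form of ∇̊ with respect to v vanishes: 2 h_{ρ[ν} ∇̊_{μ]} v^ρ = 0. -/

import Mathlib

/-- Partial derivative `∂_μ f` of a function on `ℝ^N` (coordinate chart). -/
noncomputable def pd {N : ℕ} (μ : Fin N) (f : (Fin N → ℝ) → ℝ) (x : Fin N → ℝ) : ℝ :=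
  fderiv ℝ f x (Pi.single μ 1)

/-- Covariant derivative `∇_μ τ_ν = ∂_μ τ_ν − Γ^λ_{μν} τ_λ` of a one-form, in coordinates. -/
noncomputable def covTau {N : ℕ} (Γ : (Fin N → ℝ) → Fin N → Fin N → Fin N → ℝ)
    (τ : (Fin N → ℝ) → Fin N → ℝ) (x : Fin N → ℝ) (μ ν : Fin N) : ℝ :=
  pd μ (fun y => τ y ν) x - ∑ l, Γ x l μ ν * τ x l

/-- Covariant derivative `∇_ρ v^κ = ∂_ρ v^κ + Γ^κ_{ρλ} v^λ` of a vector field. -/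
noncomputable def covVec {N : ℕ} (Γ : (Fin N → ℝ) → Fin N → Fin N → Fin N → ℝ)
    (v : (Fin N → ℝ) → Fin N → ℝ) (x : Fin N → ℝ) (ρ κ : Fin N) : ℝ :=
  pd ρ (fun y => v y κ) x + ∑ l, Γ x κ ρ l * v x l

/-- Covariant derivative `∇_ρ h^{μν}` of a contravariant 2-tensor. -/
noncomputable def covHup {N : ℕ} (Γ : (Fin N → ℝ) → Fin N → Fin N → Fin N → ℝ)
    (h : (Fin N → ℝ) → Fin N → Fin N → ℝ) (x : Fin N → ℝ) (ρ μ ν : Fin N) : ℝ :=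
  pd ρ (fun y => h y μ ν) x + (∑ l, Γ x μ ρ l * h x l ν) + ∑ l, Γ x ν ρ l * h x μ l

/-- Covariant derivative `∇_ρ h_{μν}` of a covariant 2-tensor. -/
noncomputable def covHdown {N : ℕ} (Γ : (Fin N → ℝ) → Fin N → Fin N → Fin N → ℝ)
    (hc : (Fin N → ℝ) → Fin N → Fin N → ℝ) (x : Fin N → ℝ) (ρ μ ν : Fin N) : ℝ :=
  pd ρ (fun y => hc y μ ν) x - (∑ l, Γ x l ρ μ * hc x l ν) - ∑ l, Γ x l ρ ν * hc x μ l

/-- Coefficients of the special Galilei connection determined by a unit timelike vector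
field `v`: `Γ̊^ρ_{μν} = v^ρ ∂_μ τ_ν + ½ h^{ρσ}(∂_μ h_{νσ} + ∂_ν h_{μσ} − ∂_σ h_{μν})`. -/
noncomputable def specialGamma {N : ℕ}
    (τ : (Fin N → ℝ) → Fin N → ℝ) (h hc : (Fin N → ℝ) → Fin N → Fin N → ℝ)
    (v : (Fin N → ℝ) → Fin N → ℝ) (x : Fin N → ℝ) (ρ μ ν : Fin N) : ℝ :=
  v x ρ * pd μ (fun y => τ y ν) x +
    (1 / 2) * ∑ σ, h x ρ σ *
      (pd μ (fun y => hc y ν σ) x + pd ν (fun y => hc y μ σ) x - pd σ (fun y => hc y μ ν) x)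

lemma pd_mul {N : ℕ} (μ : Fin N) (f g : (Fin N → ℝ) → ℝ) (x : Fin N → ℝ)
    (hf : DifferentiableAt ℝ f x) (hg : DifferentiableAt ℝ g x) :
    pd μ (fun y => f y * g y) x = pd μ f x * g x + f x * pd μ g x := by
  unfold pd
  rw [fderiv_fun_mul hf hg]
  simp only [ContinuousLinearMap.add_apply, ContinuousLinearMap.smul_apply, smul_eq_mul]
  ring

lemma pd_sum {N : ℕ} (μ : Fin N) (f : Fin N → (Fin N → ℝ) → ℝ) (x : Fin N → ℝ)
    (hf : ∀ i, DifferentiableAt ℝ (f i) x) :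
    pd μ (fun y => ∑ i, f i y) x = ∑ i, pd μ (f i) x := by
  unfold pd
  rw [fderiv_fun_sum (fun i _ => hf i)]
  simp

lemma alg {N : ℕ} (V T : Fin N → ℝ) (C H : Fin N → Fin N → ℝ)
    (dV dT : Fin N → Fin N → ℝ) (dC : Fin N → Fin N → Fin N → ℝ)
    (hCsymm : ∀ a b, C a b = C b a)
    (hCV : ∀ a, ∑ b, C a b * V b = 0)
    (hCH : ∀ a b, ∑ k, C a k * H k b = (if a = b then (1:ℝ) else 0) - T a * V b)
    (hD : ∀ lam mu, ∑ r, (dC mu lam r * V r + C lam r * dV mu r) = 0)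
    (hdCsymm : ∀ a b c, dC a b c = dC a c b)
    (μ ν : Fin N) :
    (∑ ρ, (dV μ ρ + ∑ l, (V ρ * dT μ l +
        (1/2) * ∑ σ, H ρ σ * (dC μ l σ + dC l μ σ - dC σ μ l)) * V l) * C ν ρ)
    = (1/2) * (∑ ρ, C ν ρ * dV μ ρ) + (1/2) * (∑ ρ, C μ ρ * dV ν ρ)
      + (1/2) * (∑ ρ, V ρ * dC ρ μ ν) := by
  have hD' : ∀ lam mu, ∑ r, dC mu lam r * V r = -∑ r, C lam r * dV mu r := by
    intro lam mu
    have h0 := hD lam mu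
    rw [Finset.sum_add_distrib] at h0
    linarith
  have hVC : ∀ b, ∑ a, V a * C a b = 0 := by
    intro b
    calc ∑ a, V a * C a b = ∑ a, C b a * V a := by
          exact Finset.sum_congr rfl fun a _ => by rw [hCsymm]; ring
      _ = 0 := hCV b
  -- expand LHS into three pieces
  have expand : (∑ ρ, (dV μ ρ + ∑ l, (V ρ * dT μ l +
        (1/2) * ∑ σ, H ρ σ * (dC μ l σ + dC l μ σ - dC σ μ l)) * V l) * C ν ρ)
      = (∑ ρ, dV μ ρ * C ν ρ)
        + (∑ ρ, ∑ l, (V ρ * dT μ l * V l) * C ν ρ)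
        + (∑ ρ, ∑ l, ∑ σ, (1/2) * (H ρ σ * ((dC μ l σ + dC l μ σ - dC σ μ l)
            * (V l * C ν ρ)))) := by
    simp only [← Finset.sum_add_distrib]
    refine Finset.sum_congr rfl fun ρ _ => ?_
    rw [add_mul, Finset.sum_mul, add_assoc]
    congr 1
    simp only [← Finset.sum_add_distrib]
    refine Finset.sum_congr rfl fun l _ => ?_
    rw [add_mul, add_mul, Finset.mul_sum, Finset.sum_mul, Finset.sum_mul]
    congr 1
    exact Finset.sum_congr rfl fun σ _ => by ring
  -- the dT piece vanishes
  have hT1 : (∑ ρ, ∑ l, (V ρ * dT μ l * V l) * C ν ρ) = 0 := by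
    rw [Finset.sum_comm]
    have : ∀ l, ∑ ρ, (V ρ * dT μ l * V l) * C ν ρ
        = (dT μ l * V l) * ∑ ρ, C ν ρ * V ρ := by
      intro l
      rw [Finset.mul_sum]
      exact Finset.sum_congr rfl fun ρ _ => by ring
    simp [this, hCV]
  -- rewrite the H piece using hCH
  have hT2 : (∑ ρ, ∑ l, ∑ σ, (1/2) * (H ρ σ * ((dC μ l σ + dC l μ σ - dC σ μ l)
        * (V l * C ν ρ))))
      = (1/2) * ∑ l, ∑ σ, (V l * (dC μ l σ + dC l μ σ - dC σ μ l))
          * ((if ν = σ then (1:ℝ) else 0) - T ν * V σ) := by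
    rw [Finset.sum_comm, Finset.mul_sum]
    refine Finset.sum_congr rfl fun l _ => ?_
    rw [Finset.sum_comm, Finset.mul_sum]
    refine Finset.sum_congr rfl fun σ _ => ?_
    rw [← hCH ν σ, Finset.mul_sum, Finset.mul_sum]
    refine Finset.sum_congr rfl fun ρ _ => by ring
  -- split the hCH-rewritten sum
  have hsplit : (∑ l, ∑ σ, (V l * (dC μ l σ + dC l μ σ - dC σ μ l))
        * ((if ν = σ then (1:ℝ) else 0) - T ν * V σ))
      = (∑ l, ∑ σ, (V l * (dC μ l σ + dC l μ σ - dC σ μ l)) * (if ν = σ then (1:ℝ) else 0))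
        - ((∑ l, ∑ σ, (V l * dC μ l σ) * (T ν * V σ))
          + (∑ l, ∑ σ, (V l * dC l μ σ) * (T ν * V σ))
          - (∑ l, ∑ σ, (V l * dC σ μ l) * (T ν * V σ))) := by
    simp only [← Finset.sum_add_distrib, ← Finset.sum_sub_distrib]
    exact Finset.sum_congr rfl fun l _ => Finset.sum_congr rfl fun σ _ => by ring
  have hdelta : (∑ l, ∑ σ, (V l * (dC μ l σ + dC l μ σ - dC σ μ l))
        * (if ν = σ then (1:ℝ) else 0))
      = ∑ l, V l * (dC μ l ν + dC l μ ν - dC ν μ l) := by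
    refine Finset.sum_congr rfl fun l _ => ?_
    simp [mul_ite, eq_comm]
  have hswap : (∑ l, ∑ σ, (V l * dC l μ σ) * (T ν * V σ))
      = (∑ l, ∑ σ, (V l * dC σ μ l) * (T ν * V σ)) := by
    rw [Finset.sum_comm]
    exact Finset.sum_congr rfl fun l _ => Finset.sum_congr rfl fun σ _ => by ring
  have hterm1 : (∑ l, ∑ σ, (V l * dC μ l σ) * (T ν * V σ)) = 0 := by
    calc (∑ l, ∑ σ, (V l * dC μ l σ) * (T ν * V σ))
        = ∑ l, (T ν * V l) * ∑ σ, dC μ l σ * V σ := by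
          refine Finset.sum_congr rfl fun l _ => ?_
          rw [Finset.mul_sum]
          exact Finset.sum_congr rfl fun σ _ => by ring
      _ = ∑ l, ∑ σ, (-(T ν)) * (dV μ σ * (V l * C l σ)) := by
          refine Finset.sum_congr rfl fun l _ => ?_
          rw [hD' l μ, mul_neg, Finset.mul_sum, ← Finset.sum_neg_distrib]
          exact Finset.sum_congr rfl fun σ _ => by ring
      _ = ∑ σ, ((-(T ν)) * dV μ σ) * ∑ l, V l * C l σ := by
          rw [Finset.sum_comm]
          refine Finset.sum_congr rfl fun σ _ => ?_
          rw [Finset.mul_sum]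
          exact Finset.sum_congr rfl fun l _ => by ring
      _ = 0 := by simp [hVC]
  have hm1 : (∑ l, V l * dC μ l ν) = -∑ l, C ν l * dV μ l := by
    rw [← hD' ν μ]
    exact Finset.sum_congr rfl fun l _ => by rw [hdCsymm μ l ν]; ring
  have hm3 : (∑ l, V l * dC ν μ l) = -∑ l, C μ l * dV ν l := by
    rw [← hD' μ ν]
    exact Finset.sum_congr rfl fun l _ => by ring
  have hmid : (∑ l, V l * (dC μ l ν + dC l μ ν - dC ν μ l))
      = (∑ l, V l * dC μ l ν) + (∑ l, V l * dC l μ ν) - (∑ l, V l * dC ν μ l) := by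
    simp only [← Finset.sum_add_distrib, ← Finset.sum_sub_distrib]
    exact Finset.sum_congr rfl fun l _ => by ring
  have t0 : (∑ ρ, dV μ ρ * C ν ρ) = ∑ ρ, C ν ρ * dV μ ρ :=
    Finset.sum_congr rfl fun ρ _ => mul_comm _ _
  rw [expand, hT1, hT2, hsplit, hdelta, hswap, hterm1, hmid, hm1, hm3, t0]
  ring

/-- On a Galilei manifold with unit timelike vector field `v`, the
Newton–Coriolis form `Ω_{μν} = 2 (∇̊_{[μ} v^ρ) h_{ν]ρ}` of the special Galilei connection
`Γ̊` with respect to `v` vanishes (in local coordinates). -/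
theorem special_connection_newton_coriolis_vanishes (n : ℕ)
    (τ : (Fin (n + 1) → ℝ) → Fin (n + 1) → ℝ)
    (h hc : (Fin (n + 1) → ℝ) → Fin (n + 1) → Fin (n + 1) → ℝ)
    (v : (Fin (n + 1) → ℝ) → Fin (n + 1) → ℝ)
    (hτsm : ∀ ν, ContDiff ℝ (⊤ : ℕ∞) fun x => τ x ν)
    (hhsm : ∀ μ ν, ContDiff ℝ (⊤ : ℕ∞) fun x => h x μ ν)
    (hhcsm : ∀ μ ν, ContDiff ℝ (⊤ : ℕ∞) fun x => hc x μ ν)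
    (hvsm : ∀ μ, ContDiff ℝ (⊤ : ℕ∞) fun x => v x μ)
    (hsymm : ∀ x μ ν, h x μ ν = h x ν μ)
    (hcsymm : ∀ x μ ν, hc x μ ν = hc x ν μ)
    (hτh : ∀ x σ, ∑ ρ, τ x ρ * h x ρ σ = 0)
    (hτv : ∀ x, ∑ ρ, τ x ρ * v x ρ = 1)
    (hcv : ∀ x μ, ∑ ν, hc x μ ν * v x ν = 0)
    (hch : ∀ x μ ν, ∑ κ, hc x μ κ * h x κ ν = (if μ = ν then (1 : ℝ) else 0) - τ x μ * v x ν) :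
    ∀ x μ ν,
      (∑ ρ, covVec (fun x ρ μ ν => specialGamma τ h hc v x ρ μ ν) v x μ ρ * hc x ν ρ)
        - (∑ ρ, covVec (fun x ρ μ ν => specialGamma τ h hc v x ρ μ ν) v x ν ρ * hc x μ ρ)
        = 0 := by
  intro x μ ν
  have hdiffv : ∀ ρ, DifferentiableAt ℝ (fun y => v y ρ) x := fun ρ =>
    ((hvsm ρ).differentiable (by simp)).differentiableAt
  have hdiffc : ∀ a b, DifferentiableAt ℝ (fun y => hc y a b) x := fun a b =>
    ((hhcsm a b).differentiable (by simp)).differentiableAt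
  have hD : ∀ lam mu, ∑ r, (pd mu (fun y => hc y lam r) x * v x r
      + hc x lam r * pd mu (fun y => v y r) x) = 0 := by
    intro lam mu
    have hzero : (fun y => ∑ r, hc y lam r * v y r) = fun _ => (0:ℝ) :=
      funext fun y => hcv y lam
    have h1 : pd mu (fun y => ∑ r, hc y lam r * v y r) x = 0 := by
      rw [hzero]; unfold pd; simp
    rw [pd_sum mu (fun r y => hc y lam r * v y r) x
      (fun r => (hdiffc lam r).mul (hdiffv r))] at h1
    rw [← h1]
    exact Finset.sum_congr rfl fun r _ =>
      (pd_mul mu _ _ x (hdiffc lam r) (hdiffv r)).symm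
  have hdCs : ∀ (a b c : Fin (n+1)),
      pd a (fun y => hc y b c) x = pd a (fun y => hc y c b) x := by
    intro a b c
    congr 1
    exact funext fun y => hcsymm y b c
  have key := fun (μ ν : Fin (n+1)) => alg (v x) (τ x) (hc x) (h x)
      (fun a b => pd a (fun y => v y b) x) (fun a b => pd a (fun y => τ y b) x)
      (fun a b c => pd a (fun y => hc y b c) x)
      (fun a b => hcsymm x a b) (fun a => hcv x a) (fun a b => hch x a b)
      hD (fun a b c => hdCs a b c) μ ν
  simp only [covVec, specialGamma]
  rw [key μ ν, key ν μ]
  have hlast : (∑ ρ, v x ρ * pd ρ (fun y => hc y ν μ) x)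
      = ∑ ρ, v x ρ * pd ρ (fun y => hc y μ ν) x :=
    Finset.sum_congr rfl fun ρ _ => by rw [hdCs ρ ν μ]
  rw [hlast]
  ring
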